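/- For integers m, n ≥ 0 and a primitive p-th root of unity ε with p odd > 1: if m ≡ −1 (mod p) or m + n < p then [m+n choose n]_ε ≠ 0 iff the ordinary binomial Lucas condition holds: [m+n choose n]_ε ≠ 0 if and only if n₀ ≤ (m+n)₀ (digit-wise base-p comparison of the lowest digits), where k = k₀ + p k₁ with 0 ≤ k₀ < p. -/

import Mathlib

noncomputable section

/-- The field `ℂ(q)` of rational functions. -/
abbrev Fq : Type := RatFunc ℂ

/-- The indeterminate `q`. -/
def q : Fq := RatFunc.X

/-- The balanced quantum integer `[n]_q = (q^n - q^{-n})/(q - q^{-1})`. -/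
def qint (n : ℤ) : Fq := (q ^ n - q ^ (-n)) / (q - q⁻¹)

/-- The quantum factorial `[m]_q!`. -/
def qfact : ℕ → Fq
  | 0 => 1
  | n + 1 => qint (n + 1) * qfact n

/-- The balanced Gaussian binomial coefficient `[n choose k]_q`,
with the convention that it is `0` for `k < 0`. -/
def qbinom (n k : ℤ) : Fq :=
  if k < 0 then 0
  else (∏ i ∈ Finset.range k.toNat, qint (n - i)) / qfact k.toNat

open Polynomial Finset

section Aux

lemma aux_q_ne_zero : q ≠ 0 := RatFunc.X_ne_zero

lemma aux_q_sq_sub_one_ne : (q ^ 2 - 1 : Fq) ≠ 0 := by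
  have : (q ^ 2 - 1 : Fq) = algebraMap (Polynomial ℂ) Fq (X ^ 2 - 1) := by
    simp [q, RatFunc.algebraMap_X, map_sub, map_pow, map_one]
  rw [this]
  rw [Ne, map_eq_zero_iff _ (RatFunc.algebraMap_injective ℂ)]
  intro h
  have := congrArg (Polynomial.coeff · 2) h
  simp [coeff_one] at this

lemma aux_q_sub_inv_ne : (q - q⁻¹ : Fq) ≠ 0 := by
  intro h
  apply aux_q_sq_sub_one_ne
  have h2 : (q - q⁻¹) * q = q ^ 2 - 1 := by
    rw [sub_mul, inv_mul_cancel₀ aux_q_ne_zero]; ring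
  rw [h] at h2
  rw [← h2]; ring

lemma aux_e1 : (q ^ 2 - 1 : Fq) = (q - q⁻¹) * q := by
  rw [sub_mul, inv_mul_cancel₀ aux_q_ne_zero]; ring

lemma aux_qint_key (k : ℕ) : qint k * q ^ k * (q ^ 2 - 1) = q * (q ^ (2 * k) - 1) := by
  have hq := aux_q_ne_zero
  have hqi := aux_q_sub_inv_ne
  have hk : (q : Fq) ^ k ≠ 0 := pow_ne_zero _ hq
  have h1 : (q : Fq) ^ (k : ℤ) = q ^ k := zpow_natCast q k
  have h2 : (q : Fq) ^ (-(k : ℤ)) = (q ^ k)⁻¹ := by rw [zpow_neg, h1]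
  have key : qint (k : ℤ) * (q - q⁻¹) = q ^ k - (q ^ k)⁻¹ := by
    rw [qint, h1, h2, div_mul_cancel₀ _ hqi]
  calc qint (k : ℤ) * q ^ k * (q ^ 2 - 1)
      = (qint (k : ℤ) * (q - q⁻¹)) * (q ^ k * q) := by rw [aux_e1]; ring
    _ = (q ^ k - (q ^ k)⁻¹) * (q ^ k * q) := by rw [key]
    _ = (q ^ k * q ^ k - ((q ^ k)⁻¹ * q ^ k)) * q := by ring
    _ = q * (q ^ (2 * k) - 1) := by
        rw [inv_mul_cancel₀ hk, two_mul, pow_add]; ring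

lemma aux_qfact_key (n : ℕ) :
    qfact n * q ^ (∑ i ∈ range n, (i + 1)) * (q ^ 2 - 1) ^ n
      = q ^ n * ∏ i ∈ range n, (q ^ (2 * (i + 1)) - 1) := by
  induction n with
  | zero => simp [qfact]
  | succ n ih =>
    have hk := aux_qint_key (n + 1)
    push_cast at hk
    rw [sum_range_succ, prod_range_succ]
    calc qfact (n + 1) * q ^ (∑ i ∈ range n, (i + 1) + (n + 1)) * (q ^ 2 - 1) ^ (n + 1)
        = (qint ((n : ℤ) + 1) * q ^ (n + 1) * (q ^ 2 - 1)) *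
            (qfact n * q ^ (∑ i ∈ range n, (i + 1)) * (q ^ 2 - 1) ^ n) := by
          rw [qfact]; ring
      _ = (q * (q ^ (2 * (n + 1)) - 1)) * (q ^ n * ∏ i ∈ range n, (q ^ (2 * (i + 1)) - 1)) := by
          rw [hk, ih]
      _ = q ^ (n + 1) * ((∏ i ∈ range n, (q ^ (2 * (i + 1)) - 1)) * (q ^ (2 * (n + 1)) - 1)) := by
          ring

lemma aux_prod_key (m n : ℕ) :
    (∏ i ∈ range n, qint ((m : ℤ) + n - i)) * q ^ (∑ i ∈ range n, (m + n - i)) * (q ^ 2 - 1) ^ n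
      = q ^ n * ∏ i ∈ range n, (q ^ (2 * (m + n - i)) - 1) := by
  calc (∏ i ∈ range n, qint ((m : ℤ) + n - i)) * q ^ (∑ i ∈ range n, (m + n - i)) * (q ^ 2 - 1) ^ n
      = ∏ i ∈ range n, (qint ((m : ℤ) + n - i) * q ^ (m + n - i) * (q ^ 2 - 1)) := by
        rw [Finset.prod_mul_distrib, Finset.prod_mul_distrib, Finset.prod_const,
          Finset.card_range, Finset.prod_pow_eq_pow_sum]
    _ = ∏ i ∈ range n, (q * (q ^ (2 * (m + n - i)) - 1)) := by
        refine Finset.prod_congr rfl fun i hi => ?_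
        have hi' : i < n := Finset.mem_range.mp hi
        have hcast : (m : ℤ) + n - i = ((m + n - i : ℕ) : ℤ) := by
          push_cast [Nat.cast_sub (by omega : i ≤ m + n)]; ring
        rw [hcast, aux_qint_key]
    _ = q ^ n * ∏ i ∈ range n, (q ^ (2 * (m + n - i)) - 1) := by
        rw [Finset.prod_mul_distrib, Finset.prod_const, Finset.card_range]

lemma aux_q_pow_sub_one_ne (k : ℕ) (hk : k ≠ 0) : (q ^ k - 1 : Fq) ≠ 0 := by
  have : (q ^ k - 1 : Fq) = algebraMap (Polynomial ℂ) Fq (X ^ k - 1) := by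
    simp [q, RatFunc.algebraMap_X, map_sub, map_pow, map_one]
  rw [this, Ne, map_eq_zero_iff _ (RatFunc.algebraMap_injective ℂ)]
  intro h
  have := congrArg (Polynomial.eval 0) h
  simp [zero_pow hk] at this

lemma aux_FQ_ne_zero (n : ℕ) : (∏ i ∈ range n, (q ^ (2 * (i + 1)) - 1) : Fq) ≠ 0 :=
  Finset.prod_ne_zero_iff.mpr fun i _ => aux_q_pow_sub_one_ne _ (by omega)

lemma aux_qfact_ne_zero (n : ℕ) : qfact n ≠ 0 := by
  have h := aux_qfact_key n
  intro h0
  rw [h0, zero_mul, zero_mul] at h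
  exact (mul_ne_zero (pow_ne_zero _ aux_q_ne_zero) (aux_FQ_ne_zero n)) h.symm

lemma aux_sum_shift (m n : ℕ) :
    ∑ i ∈ range n, (m + n - i) = m * n + ∑ i ∈ range n, (i + 1) := by
  rw [← Finset.sum_range_reflect (fun i => m + n - i) n]
  have : ∀ i ∈ range n, (m + n - (n - 1 - i)) = m + (i + 1) := fun i hi => by
    have := Finset.mem_range.mp hi; omega
  rw [Finset.sum_congr rfl this, Finset.sum_add_distrib, Finset.sum_const, Finset.card_range,
    smul_eq_mul]
  ring

lemma aux_qbinom_master (m n : ℕ) :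
    qbinom ((m : ℤ) + n) n * (∏ i ∈ range n, (q ^ (2 * (i + 1)) - 1)) * q ^ (m * n)
      = ∏ i ∈ range n, (q ^ (2 * (m + n - i)) - 1) := by
  rw [qbinom, if_neg (by omega), Int.toNat_natCast]
  rw [div_mul_eq_mul_div, div_mul_eq_mul_div, div_eq_iff (aux_qfact_ne_zero n)]
  apply mul_right_cancel₀ (b := q ^ (∑ i ∈ range n, (i + 1)) * (q ^ 2 - 1) ^ n)
    (mul_ne_zero (pow_ne_zero _ aux_q_ne_zero) (pow_ne_zero _ aux_q_sq_sub_one_ne))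
  calc (∏ i ∈ range n, qint ((m : ℤ) + n - i)) * (∏ i ∈ range n, (q ^ (2 * (i + 1)) - 1))
          * q ^ (m * n) * (q ^ (∑ i ∈ range n, (i + 1)) * (q ^ 2 - 1) ^ n)
      = ((∏ i ∈ range n, qint ((m : ℤ) + n - i)) * q ^ (∑ i ∈ range n, (m + n - i))
          * (q ^ 2 - 1) ^ n) * (∏ i ∈ range n, (q ^ (2 * (i + 1)) - 1)) := by
        rw [aux_sum_shift, pow_add]; ring
    _ = (q ^ n * ∏ i ∈ range n, (q ^ (2 * (m + n - i)) - 1))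
          * (∏ i ∈ range n, (q ^ (2 * (i + 1)) - 1)) := by rw [aux_prod_key]
    _ = (∏ i ∈ range n, (q ^ (2 * (m + n - i)) - 1))
          * (qfact n * q ^ (∑ i ∈ range n, (i + 1)) * (q ^ 2 - 1) ^ n) := by
        rw [aux_qfact_key]; ring
    _ = (∏ i ∈ range n, (q ^ (2 * (m + n - i)) - 1)) * qfact n
          * (q ^ (∑ i ∈ range n, (i + 1)) * (q ^ 2 - 1) ^ n) := by ring

lemma aux_count_div (p m : ℕ) : ∀ n : ℕ,
    (∑ i ∈ range n, if p ∣ (m + 1 + i) then 1 else 0) = (m + n) / p - m / p := by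
  intro n
  induction n with
  | zero => simp
  | succ n ih =>
    rw [Finset.sum_range_succ, ih]
    have h1 : (m + n + 1) / p = (m + n) / p + if p ∣ (m + n + 1) then 1 else 0 :=
      Nat.succ_div
    have h2 : m / p ≤ (m + n) / p := Nat.div_le_div_right (by omega)
    have h3 : (m + n) / p ≤ (m + n + 1) / p := Nat.div_le_div_right (by omega)
    have e : m + 1 + n = m + n + 1 := by omega
    rw [e, show m + (n + 1) = m + n + 1 from by omega, h1]
    split <;> omega

lemma aux_digits_iff (p m n : ℕ) (hp : 1 < p) (h : m % p = p - 1 ∨ m + n < p) :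
    ((m + n) / p - m / p = n / p) ↔ n % p ≤ (m + n) % p := by
  rcases h with h | h
  · have hpd : p ∣ m + 1 := by
      apply Nat.dvd_of_mod_eq_zero
      rw [Nat.add_mod, h, Nat.mod_eq_of_lt hp, show p - 1 + 1 = p from by omega, Nat.mod_self]
    have hm1div : (m + 1) / p = m / p + 1 := by
      rw [Nat.succ_div, if_pos hpd]
    by_cases h0 : n % p = 0
    · have hdn : p ∣ n := Nat.dvd_of_mod_eq_zero h0
      have hdiv : (m + n) / p = m / p + n / p := Nat.add_div_of_dvd_left hdn
      have hmod : (m + n) % p = m % p := by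
        rw [Nat.add_mod, h0, Nat.add_zero, Nat.mod_mod_of_dvd m dvd_rfl]
      rw [hdiv, hmod, h0, h]
      refine iff_of_true ?_ (by omega)
      generalize m / p = A
      generalize n / p = B
      omega
    · have hn0 : n ≠ 0 := fun e => h0 (by simp [e])
      have hnlt : n % p < p := Nat.mod_lt _ (by omega)
      have hsub : (n - 1) / p = n / p ∧ (n - 1) % p = n % p - 1 := by
        apply (Nat.div_mod_unique (show 0 < p from by omega)).mpr
        have hd := Nat.div_add_mod n p
        exact ⟨by omega, by omega⟩
      have e : m + n = (m + 1) + (n - 1) := by omega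
      have hdiv : (m + n) / p = (m + 1) / p + (n - 1) / p := by
        rw [e]; exact Nat.add_div_of_dvd_right hpd
      have hmod : (m + n) % p = (n - 1) % p := by
        rw [e, Nat.add_mod, Nat.mod_eq_zero_of_dvd hpd, zero_add,
          Nat.mod_mod_of_dvd _ dvd_rfl]
      rw [hdiv, hmod, hm1div, hsub.1, hsub.2]
      refine iff_of_false ?_ (by omega)
      generalize m / p = A
      generalize n / p = B
      omega
  · have hm : m / p = 0 := Nat.div_eq_of_lt (by omega)
    have hn : n / p = 0 := Nat.div_eq_of_lt (by omega)
    have hmn : (m + n) / p = 0 := Nat.div_eq_of_lt h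
    have hn' : n % p = n := Nat.mod_eq_of_lt (by omega)
    have hmn' : (m + n) % p = m + n := Nat.mod_eq_of_lt h
    rw [hm, hn, hmn, hn', hmn']
    refine iff_of_true (by omega) (by omega)

lemma aux_X_pow_sub_one_ne (k : ℕ) (hk : k ≠ 0) : (X ^ k - 1 : ℂ[X]) ≠ 0 := by
  intro h
  have := congrArg (Polynomial.eval 0) h
  simp [zero_pow hk] at this

lemma aux_rm_X_pow_sub_one (ε : ℂ) (k : ℕ) (hk : k ≠ 0) :
    (X ^ k - 1 : ℂ[X]).rootMultiplicity ε = if ε ^ k = 1 then 1 else 0 := by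
  have hne := aux_X_pow_sub_one_ne k hk
  by_cases h : ε ^ k = 1
  · rw [if_pos h]
    have hroot : IsRoot (X ^ k - 1 : ℂ[X]) ε := by simp [IsRoot, h]
    have h1 : 1 ≤ (X ^ k - 1 : ℂ[X]).rootMultiplicity ε :=
      (rootMultiplicity_pos hne).mpr hroot
    have hsep : (X ^ k - 1 : ℂ[X]).Separable := by
      have := Polynomial.separable_X_pow_sub_C (1 : ℂ)
        (Nat.cast_ne_zero.mpr hk) one_ne_zero
      simpa using this
    have h2 := rootMultiplicity_le_one_of_separable hsep ε
    omega
  · rw [if_neg h]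
    apply rootMultiplicity_eq_zero
    simp [IsRoot, sub_eq_zero, h]

lemma aux_rm_prod {ι : Type*} (s : Finset ι) (f : ι → ℂ[X]) (h : ∀ i ∈ s, f i ≠ 0) (x : ℂ) :
    (∏ i ∈ s, f i).rootMultiplicity x = ∑ i ∈ s, (f i).rootMultiplicity x := by
  classical
  induction s using Finset.cons_induction with
  | empty => simp [rootMultiplicity_eq_zero (by simp [IsRoot] : ¬IsRoot (1 : ℂ[X]) x)]
  | cons a s ha ih =>
    rw [prod_cons, sum_cons, rootMultiplicity_mul,
      ih (fun i hi => h i (mem_cons.mpr (Or.inr hi)))]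
    exact mul_ne_zero (h a (mem_cons_self a s)) <|
      prod_ne_zero_iff.mpr fun i hi => h i (mem_cons.mpr (Or.inr hi))

end Aux

/-- For `m, n ≥ 0` and `ε` a primitive `p`-th root of unity (`p` odd `> 1`):
if `m ≡ -1 (mod p)` or `m + n < p`, then the value at `q = ε` of the Laurent
polynomial `[m+n choose n]_q = ∑ i, cᵢ qⁱ` is nonzero if and only if
`n₀ ≤ (m+n)₀`, where `k₀ = k % p` is the lowest base-`p` digit. -/
theorem qbinom_nonzero_iff (p : ℕ) (hodd : Odd p) (hp : 1 < p)
    (ε : ℂ) (hε : IsPrimitiveRoot ε p) (m n : ℕ)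
    (hmn : m % p = p - 1 ∨ m + n < p) (c : ℤ →₀ ℂ)
    (hc : qbinom ((m : ℤ) + n) n = c.sum fun i a => algebraMap ℂ Fq a * q ^ i) :
    (c.sum fun i a => a * ε ^ i) ≠ 0 ↔ n % p ≤ (m + n) % p := by
  classical
  have hp0 : p ≠ 0 := by omega
  have hε0 : ε ≠ 0 := by
    intro h0
    have := hε.pow_eq_one
    rw [h0, zero_pow hp0] at this
    exact zero_ne_one this
  set M : ℕ := c.support.sup (fun i => (-i).toNat) with hM
  set P : ℂ[X] := ∏ i ∈ range n, (X ^ (2 * (m + n - i)) - 1) with hP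
  set Q : ℂ[X] := ∏ i ∈ range n, (X ^ (2 * (i + 1)) - 1) with hQ
  set R : ℂ[X] := ∑ i ∈ c.support, Polynomial.C (c i) * X ^ ((M : ℤ) + i).toNat with hR
  have hPfac : ∀ i ∈ range n, (X ^ (2 * (m + n - i)) - 1 : ℂ[X]) ≠ 0 := fun i hi =>
    aux_X_pow_sub_one_ne _ (by have := mem_range.mp hi; omega)
  have hQfac : ∀ i ∈ range n, (X ^ (2 * (i + 1)) - 1 : ℂ[X]) ≠ 0 := fun i _ =>
    aux_X_pow_sub_one_ne _ (by omega)
  have hPne : P ≠ 0 := prod_ne_zero_iff.mpr hPfac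
  have hQne : Q ≠ 0 := prod_ne_zero_iff.mpr hQfac
  have hmapP : algebraMap ℂ[X] Fq P = ∏ i ∈ range n, (q ^ (2 * (m + n - i)) - 1) := by
    rw [hP, map_prod]
    exact prod_congr rfl fun i _ => by
      simp [q, map_sub, map_pow, map_one, RatFunc.algebraMap_X]
  have hmapQ : algebraMap ℂ[X] Fq Q = ∏ i ∈ range n, (q ^ (2 * (i + 1)) - 1) := by
    rw [hQ, map_prod]
    exact prod_congr rfl fun i _ => by
      simp [q, map_sub, map_pow, map_one, RatFunc.algebraMap_X]
  have hsupp : ∀ i ∈ c.support, (0 : ℤ) ≤ (M : ℤ) + i := fun i hi => by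
    have h1 : (-i).toNat ≤ M := Finset.le_sup (f := fun i => (-i).toNat) hi
    have h2 : (-i : ℤ) ≤ ((-i).toNat : ℤ) := Int.self_le_toNat _
    omega
  have hmapR : algebraMap ℂ[X] Fq R
      = q ^ (M : ℕ) * (c.sum fun i a => algebraMap ℂ Fq a * q ^ i) := by
    rw [hR, map_sum, Finsupp.sum, Finset.mul_sum]
    refine sum_congr rfl fun i hi => ?_
    have hCa : algebraMap ℂ[X] Fq (Polynomial.C (c i)) = algebraMap ℂ Fq (c i) :=
      (IsScalarTower.algebraMap_apply ℂ ℂ[X] Fq (c i)).symm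
    have hpow : (q : Fq) ^ (((M : ℤ) + i).toNat) = q ^ (M : ℕ) * q ^ (i : ℤ) := by
      rw [← zpow_natCast q (((M : ℤ) + i).toNat), Int.toNat_of_nonneg (hsupp i hi),
        zpow_add₀ aux_q_ne_zero, zpow_natCast]
    rw [map_mul, map_pow, hCa, RatFunc.algebraMap_X, show RatFunc.X = q from rfl, hpow]
    ring
  have key : algebraMap ℂ[X] Fq (R * Q * X ^ (m * n)) = algebraMap ℂ[X] Fq (X ^ M * P) := by
    have master := aux_qbinom_master m n
    rw [hc] at master
    rw [map_mul, map_mul, map_mul, map_pow, map_pow, RatFunc.algebraMap_X,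
      show RatFunc.X = q from rfl, hmapR, hmapQ, hmapP]
    calc q ^ (M : ℕ) * (c.sum fun i a => algebraMap ℂ Fq a * q ^ i)
            * (∏ i ∈ range n, (q ^ (2 * (i + 1)) - 1)) * q ^ (m * n)
        = q ^ (M : ℕ) * ((c.sum fun i a => algebraMap ℂ Fq a * q ^ i)
            * (∏ i ∈ range n, (q ^ (2 * (i + 1)) - 1)) * q ^ (m * n)) := by ring
      _ = q ^ (M : ℕ) * ∏ i ∈ range n, (q ^ (2 * (m + n - i)) - 1) := by rw [master]
  have hpoly : R * Q * X ^ (m * n) = X ^ M * P := RatFunc.algebraMap_injective ℂ key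
  have hRne : R ≠ 0 := by
    intro h0
    rw [h0, zero_mul, zero_mul] at hpoly
    exact (mul_ne_zero (pow_ne_zero M X_ne_zero) hPne) hpoly.symm
  have hXpow : ∀ k : ℕ, rootMultiplicity ε ((X : ℂ[X]) ^ k) = 0 := fun k =>
    rootMultiplicity_eq_zero (fun hroot => by
      simp only [IsRoot, eval_pow, eval_X] at hroot
      exact pow_ne_zero k hε0 hroot)
  have hub1 : rootMultiplicity ε (R * Q * X ^ (m * n))
      = rootMultiplicity ε R + rootMultiplicity ε Q := by
    rw [rootMultiplicity_mul (mul_ne_zero (mul_ne_zero hRne hQne) (pow_ne_zero _ X_ne_zero)),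
      rootMultiplicity_mul (mul_ne_zero hRne hQne), hXpow, add_zero]
  have hub2 : rootMultiplicity ε (X ^ M * P) = rootMultiplicity ε P := by
    rw [rootMultiplicity_mul (mul_ne_zero (pow_ne_zero _ X_ne_zero) hPne), hXpow, zero_add]
  have hcop : Nat.Coprime p 2 := hodd.coprime_two_right
  have hdvd2 : ∀ k : ℕ, (ε ^ (2 * k) = 1) ↔ p ∣ k := fun k => by
    rw [hε.pow_eq_one_iff_dvd]
    constructor
    · intro h
      exact hcop.dvd_of_dvd_mul_left h
    · intro h
      exact h.mul_left 2
  have hrmP : rootMultiplicity ε P = (m + n) / p - m / p := by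
    rw [hP, aux_rm_prod _ _ hPfac ε]
    rw [Finset.sum_congr rfl (fun i hi => aux_rm_X_pow_sub_one ε _
      (by have := mem_range.mp hi; omega))]
    rw [Finset.sum_congr rfl (fun i hi => if_congr (hdvd2 (m + n - i)) rfl rfl)]
    rw [← Finset.sum_range_reflect (fun i => if p ∣ (m + n - i) then 1 else 0) n]
    rw [Finset.sum_congr rfl (fun i hi => by
      have := mem_range.mp hi
      rw [show m + n - (n - 1 - i) = m + 1 + i from by omega])]
    exact aux_count_div p m n
  have hrmQ : rootMultiplicity ε Q = n / p := by
    rw [hQ, aux_rm_prod _ _ hQfac ε]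
    rw [Finset.sum_congr rfl (fun i hi => aux_rm_X_pow_sub_one ε _ (by omega))]
    rw [Finset.sum_congr rfl (fun i hi => if_congr (hdvd2 (i + 1)) rfl rfl)]
    have := aux_count_div p 0 n
    simp only [zero_add, Nat.zero_div, Nat.sub_zero] at this
    rw [Finset.sum_congr rfl (fun i hi => by rw [show i + 1 = 1 + i from by omega]), this]
  have hEq : rootMultiplicity ε R + n / p = (m + n) / p - m / p := by
    rw [← hrmQ, ← hub1, hpoly, hub2, hrmP]
  have hRev : R.eval ε = ε ^ (M : ℕ) * (c.sum fun i a => a * ε ^ i) := by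
    rw [hR, eval_finset_sum, Finsupp.sum, Finset.mul_sum]
    refine sum_congr rfl fun i hi => ?_
    have hpow : ε ^ (((M : ℤ) + i).toNat) = ε ^ (M : ℕ) * ε ^ (i : ℤ) := by
      rw [← zpow_natCast ε (((M : ℤ) + i).toNat), Int.toNat_of_nonneg (hsupp i hi),
        zpow_add₀ hε0, zpow_natCast]
    rw [eval_mul, eval_pow, eval_C, eval_X, hpow]
    ring
  have hfinal : (c.sum fun i a => a * ε ^ i) ≠ 0 ↔ R.eval ε ≠ 0 := by
    rw [hRev]
    constructor
    · intro h hcon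
      exact h (by
        rcases mul_eq_zero.mp hcon with h1 | h1
        · exact absurd h1 (pow_ne_zero _ hε0)
        · exact h1)
    · intro h hcon
      exact h (by rw [hcon, mul_zero])
  rw [hfinal]
  have hrm0 : R.eval ε ≠ 0 ↔ rootMultiplicity ε R = 0 := by
    constructor
    · intro h
      exact rootMultiplicity_eq_zero h
    · intro h hcon
      have := (rootMultiplicity_pos hRne).mpr hcon
      omega
  rw [hrm0]
  rw [show (rootMultiplicity ε R = 0) ↔ ((m + n) / p - m / p = n / p) from by
    constructor
    · intro h; omega
    · intro h
      rw [h] at hEq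
      omega]
  exact aux_digits_iff p m n hp hmn
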